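/- Fix t ∈ ℂ and define D(x,y) = 4y² + 4x⁻¹y + x⁻² − x⁻¹(4x² + t)² for x ≠ 0. Let M, N ≥ 0 be integers, f₀, …, f_M ∈ ℂ[ξ], g₀, …, g_N ∈ ℂ[ξ] with g_N ≠ 0, and define for x ≠ 0: H⁺(x,y) = Σ_{m=0}^{M} f_m(x⁻¹) D(x,y)^m and H⁻(x,y) = (2x⁻²y + x⁻³) Σ_{n=0}^{N} g_n(x⁻¹) D(x,y)^n. If there exists a polynomial H ∈ ℂ[x,y] with H(x,y) = H⁺(x,y) + H⁻(x,y) for all x ≠ 0 and all y ∈ ℂ, then there exists an index m with N < m ≤ M and f_m ≠ 0; in particular M > N and the even part H⁺ is nontrivial. -/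

import Mathlib

open MvPolynomial

lemma aux_eval (x y : ℂ) (H : MvPolynomial (Fin 2) ℂ) :
    Polynomial.eval y (MvPolynomial.aeval ![Polynomial.C x, Polynomial.X] H) =
      MvPolynomial.eval ![x, y] H := by
  induction H using MvPolynomial.induction_on with
  | C a => simp
  | add p q hp hq => simp [hp, hq]
  | mul_X p i hp => fin_cases i <;> simp [hp]

lemma aux_map (x : ℂ) (H : MvPolynomial (Fin 2) ℂ) :
    (MvPolynomial.aeval (![Polynomial.C Polynomial.X, Polynomial.X] :
        Fin 2 → Polynomial (Polynomial ℂ)) H).map (Polynomial.evalRingHom x)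
      = MvPolynomial.aeval ![Polynomial.C x, Polynomial.X] H := by
  induction H using MvPolynomial.induction_on with
  | C a => simp
  | add p q hp hq => simp [hp, hq]
  | mul_X p i hp => fin_cases i <;> simp [hp]

theorem even_degree_exceeds_odd_degree (t : ℂ) (M N : ℕ)
    (f g : ℕ → Polynomial ℂ) (hg : g N ≠ 0)
    (H : MvPolynomial (Fin 2) ℂ)
    (hH : ∀ x y : ℂ, x ≠ 0 →
      eval ![x, y] H =
        (∑ m ∈ Finset.range (M + 1), Polynomial.eval x⁻¹ (f m) *
          (4*y^2 + 4*x⁻¹*y + x⁻¹^2 - x⁻¹*(4*x^2 + t)^2)^m) +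
        (2*x⁻¹^2*y + x⁻¹^3) *
          ∑ n ∈ Finset.range (N + 1), Polynomial.eval x⁻¹ (g n) *
            (4*y^2 + 4*x⁻¹*y + x⁻¹^2 - x⁻¹*(4*x^2 + t)^2)^n) :
    ∃ m : ℕ, N < m ∧ m ≤ M ∧ f m ≠ 0 := by
  by_contra hcon
  push_neg at hcon
  set P : Polynomial ℂ :=
    (MvPolynomial.aeval (![Polynomial.C Polynomial.X, Polynomial.X] :
      Fin 2 → Polynomial (Polynomial ℂ)) H).coeff (2*N+1) with hP
  have key : ∀ x : ℂ, x ≠ 0 →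
      Polynomial.eval x P = 2 * x⁻¹^2 * (Polynomial.eval x⁻¹ (g N) * 4^N) := by
    intro x hx
    set c : ℂ := x⁻¹^2 - x⁻¹*(4*x^2 + t)^2 with hc
    set Dx : Polynomial ℂ := Polynomial.C 4 * Polynomial.X^2 +
      Polynomial.C (4*x⁻¹) * Polynomial.X + Polynomial.C c with hDx
    have hDdeg : Dx.natDegree = 2 := by rw [hDx]; compute_degree!
    have hDlead : Dx.coeff 2 = 4 := by
      simp [hDx, Polynomial.coeff_add, Polynomial.coeff_C_mul, Polynomial.coeff_X_pow,
        Polynomial.coeff_C, Polynomial.coeff_X]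
    have hpowdeg : ∀ m k : ℕ, 2*m < k → (Dx^m).coeff k = 0 := by
      intro m k hk
      apply Polynomial.coeff_eq_zero_of_natDegree_lt
      calc (Dx^m).natDegree ≤ m * Dx.natDegree := Polynomial.natDegree_pow_le
        _ = 2*m := by rw [hDdeg]; ring
        _ < k := hk
    set S : Polynomial ℂ :=
      ∑ n ∈ Finset.range (N+1), Polynomial.C (Polynomial.eval x⁻¹ (g n)) * Dx^n with hS
    set A : Polynomial ℂ :=
      (∑ m ∈ Finset.range (M+1), Polynomial.C (Polynomial.eval x⁻¹ (f m)) * Dx^m)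
      + (Polynomial.C (2*x⁻¹^2) * (Polynomial.X * S) + Polynomial.C (x⁻¹^3) * S) with hA
    have hterm : ∀ y : ℂ, Polynomial.eval y Dx =
        4*y^2 + 4*x⁻¹*y + x⁻¹^2 - x⁻¹*(4*x^2 + t)^2 := by
      intro y; simp [hDx, hc]; ring
    have hAH : MvPolynomial.aeval ![Polynomial.C x, Polynomial.X] H = A := by
      apply Polynomial.funext
      intro y
      rw [aux_eval, hH x y hx, hA, hS]
      simp only [Polynomial.eval_add, Polynomial.eval_mul, Polynomial.eval_finset_sum,
        Polynomial.eval_C, Polynomial.eval_X, Polynomial.eval_pow, hterm]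
      ring
    have hPx : Polynomial.eval x P = A.coeff (2*N+1) := by
      rw [hP]
      calc Polynomial.eval x ((MvPolynomial.aeval (![Polynomial.C Polynomial.X, Polynomial.X] :
            Fin 2 → Polynomial (Polynomial ℂ)) H).coeff (2*N+1))
          = ((MvPolynomial.aeval (![Polynomial.C Polynomial.X, Polynomial.X] :
            Fin 2 → Polynomial (Polynomial ℂ)) H).map (Polynomial.evalRingHom x)).coeff (2*N+1) := by
            rw [Polynomial.coeff_map]; rfl
        _ = A.coeff (2*N+1) := by rw [aux_map, hAH]
    have hScoeff_odd : S.coeff (2*N+1) = 0 := by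
      rw [hS, Polynomial.finset_sum_coeff]
      apply Finset.sum_eq_zero
      intro n hn
      rw [Polynomial.coeff_C_mul, hpowdeg n (2*N+1) (by have := Finset.mem_range.mp hn; omega),
        mul_zero]
    have hScoeff : S.coeff (2*N) = Polynomial.eval x⁻¹ (g N) * 4^N := by
      rw [hS, Finset.sum_range_succ, Polynomial.coeff_add, Polynomial.finset_sum_coeff]
      have h1 : ∀ n ∈ Finset.range N,
          (Polynomial.C (Polynomial.eval x⁻¹ (g n)) * Dx^n).coeff (2*N) = 0 := by
        intro n hn
        rw [Polynomial.coeff_C_mul, hpowdeg n (2*N) (by have := Finset.mem_range.mp hn; omega),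
          mul_zero]
      rw [Finset.sum_eq_zero h1, zero_add, Polynomial.coeff_C_mul]
      congr 1
      have h2 : (Dx^N).coeff (N * Dx.natDegree) = Dx.leadingCoeff ^ N :=
        Polynomial.coeff_pow_mul_natDegree Dx N
      rw [hDdeg] at h2
      have h3 : Dx.leadingCoeff = 4 := by
        rw [Polynomial.leadingCoeff, hDdeg, hDlead]
      rw [h3] at h2
      rw [show 2*N = N*2 by ring, h2]
    have hEven : (∑ m ∈ Finset.range (M+1),
        Polynomial.C (Polynomial.eval x⁻¹ (f m)) * Dx^m).coeff (2*N+1) = 0 := by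
      rw [Polynomial.finset_sum_coeff]
      apply Finset.sum_eq_zero
      intro m hm
      by_cases hmN : m ≤ N
      · rw [Polynomial.coeff_C_mul, hpowdeg m (2*N+1) (by omega), mul_zero]
      · have hfm : f m = 0 := hcon m (by omega) (by have := Finset.mem_range.mp hm; omega)
        simp [hfm]
    rw [hPx, hA, Polynomial.coeff_add, hEven, zero_add, Polynomial.coeff_add,
      Polynomial.coeff_C_mul, Polynomial.coeff_C_mul, Polynomial.coeff_X_mul,
      hScoeff, hScoeff_odd, mul_zero, add_zero]
  -- Now derive a contradiction
  set d : ℕ := (g N).natDegree with hd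
  have hrev : ∀ x : ℂ, x ≠ 0 →
      Polynomial.eval x ((g N).reverse) = x^d * Polynomial.eval x⁻¹ (g N) := by
    intro x hx
    have : Invertible (x⁻¹ : ℂ) := invertibleOfNonzero (inv_ne_zero hx)
    have h := Polynomial.eval₂_reverse_mul_pow (RingHom.id ℂ) (x⁻¹) (g N)
    rw [invOf_eq_inv x⁻¹, inv_inv] at h
    have h' : Polynomial.eval x (g N).reverse * x⁻¹ ^ (g N).natDegree =
        Polynomial.eval x⁻¹ (g N) := h
    rw [← h', mul_left_comm, hd, ← mul_pow, mul_inv_cancel₀ hx, one_pow, mul_one]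
  set Q : Polynomial ℂ := Polynomial.X^(d+2) * P -
    Polynomial.C (2 * 4^N) * (g N).reverse with hQ
  have hQ0 : Q = 0 := by
    apply Polynomial.eq_zero_of_infinite_isRoot
    apply Set.Infinite.mono (s := ({0}ᶜ : Set ℂ))
    · intro x hx
      have hx0 : x ≠ 0 := hx
      show Polynomial.IsRoot Q x
      rw [Polynomial.IsRoot, hQ]
      simp only [Polynomial.eval_sub, Polynomial.eval_mul, Polynomial.eval_pow,
        Polynomial.eval_X, Polynomial.eval_C, key x hx0, hrev x hx0]
      field_simp
      ring
    · exact Set.Finite.infinite_compl (Set.finite_singleton 0)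
  have h0 : Q.coeff 0 = 0 := by rw [hQ0]; simp
  rw [hQ, Polynomial.coeff_sub, Polynomial.mul_coeff_zero, Polynomial.mul_coeff_zero,
    Polynomial.coeff_X_pow, Polynomial.coeff_C, Polynomial.coeff_zero_reverse] at h0
  simp at h0
  exact hg h0
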